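/- Let (M, vol) be a measure space with finite measure vol, let ε > 0 and λ ≥ 1. Let μ : M → ℝ be a bounded measurable function with ∫_M μ dvol = 1 and μ(x) > ε almost everywhere, and let μ̄ : M → ℝ be an integrable function with ∫_M μ̄ dvol = 1. With μ̄₊(x) = max{ε, μ̄(x)} and μ̄₋(x) = ε − min{ε, μ̄(x)}, the loss ℓ(μ̄) = −∫_M μ·log μ̄₊ dvol + λ·∫_M μ̄₋ dvol satisfies ℓ(μ̄) = D(μ, μ̄₊) − ∫_M μ·log μ dvol + (λ − 1)·∫_M μ̄₋ dvol, where D(f,g) = ∫_M f·log(f/g) dvol − ∫_M f dvol + ∫_M g dvol is the generalized Kullback–Leibler divergence. -/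

import Mathlib

open MeasureTheory Real

/-- The Moser Flow loss `ℓ(μ̄) = −∫ μ·log μ̄₊ + λ·∫ μ̄₋` equals
`D(μ, μ̄₊) − ∫ μ·log μ + (λ − 1)·∫ μ̄₋`, where
`D(f,g) = ∫ f·log(f/g) − ∫ f + ∫ g` is the generalized KL divergence,
`μ̄₊ = max{ε, μ̄}` and `μ̄₋ = ε − min{ε, μ̄}`. -/
theorem moser_flow_loss_eq_KL_decomposition
    {M : Type*} [MeasurableSpace M] (vol : Measure M) [IsFiniteMeasure vol]
    (ε lam : ℝ) (hε : 0 < ε) (hlam : 1 ≤ lam)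
    (μ : M → ℝ) (hμmeas : Measurable μ) (hμbdd : ∃ C : ℝ, ∀ x, |μ x| ≤ C)
    (hμone : ∫ x, μ x ∂vol = 1) (hμpos : ∀ᵐ x ∂vol, ε < μ x)
    (μbar : M → ℝ) (hint : Integrable μbar vol) (hone : ∫ x, μbar x ∂vol = 1) :
    -(∫ x, μ x * Real.log (max ε (μbar x)) ∂vol)
        + lam * ∫ x, (ε - min ε (μbar x)) ∂vol
      = ((∫ x, μ x * Real.log (μ x / max ε (μbar x)) ∂vol)
            - (∫ x, μ x ∂vol) + ∫ x, max ε (μbar x) ∂vol)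
          - (∫ x, μ x * Real.log (μ x) ∂vol)
          + (lam - 1) * ∫ x, (ε - min ε (μbar x)) ∂vol := by
  obtain ⟨C, hC⟩ := hμbdd
  have hεp : ∀ x, (0:ℝ) < max ε (μbar x) := fun x => lt_of_lt_of_le hε (le_max_left _ _)
  have hpint : Integrable (fun x => max ε (μbar x)) vol :=
    by simpa [Pi.sup_def] using (integrable_const ε).sup hint
  have hmint : Integrable (fun x => ε - min ε (μbar x)) vol :=
    (integrable_const ε).sub ((by simpa [Pi.inf_def] using (integrable_const ε).inf hint : Integrable (fun x => min ε (μbar x)) vol))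
  -- ∫ max = ∫ μbar + ∫ (ε - min)
  have hsum : (∫ x, max ε (μbar x) ∂vol)
      = (∫ x, μbar x ∂vol) + ∫ x, (ε - min ε (μbar x)) ∂vol := by
    rw [← integral_add hint hmint]
    apply integral_congr_ae
    filter_upwards with x
    have := max_add_min ε (μbar x)
    linarith
  -- integrability of log (max ε μbar)
  have hlogp_int : Integrable (fun x => Real.log (max ε (μbar x))) vol := by
    apply Integrable.mono' ((integrable_const (|Real.log ε|)).add hpint.abs)
    · exact (Real.measurable_log.comp_aemeasurable hpint.aemeasurable).aestronglyMeasurable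
    · filter_upwards with x
      have h1 : Real.log ε ≤ Real.log (max ε (μbar x)) :=
        Real.log_le_log hε (le_max_left _ _)
      have h2 : Real.log (max ε (μbar x)) ≤ max ε (μbar x) - 1 :=
        Real.log_le_sub_one_of_pos (hεp x)
      have h3 : max ε (μbar x) ≤ |max ε (μbar x)| := le_abs_self _
      have h4 : -|Real.log ε| ≤ Real.log ε := neg_abs_le _
      have h5 : (0:ℝ) ≤ |max ε (μbar x)| := abs_nonneg _
      have h6 : (0:ℝ) ≤ |Real.log ε| := abs_nonneg _
      simp only [Pi.add_apply]
      rw [Real.norm_eq_abs, abs_le]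
      constructor <;> linarith
  have hμlogp_int : Integrable (fun x => μ x * Real.log (max ε (μbar x))) vol :=
    hlogp_int.bdd_mul hμmeas.aestronglyMeasurable (c := C) (Filter.Eventually.of_forall fun x => by
      simpa [Real.norm_eq_abs] using hC x)
  have hμlogμ_int : Integrable (fun x => μ x * Real.log (μ x)) vol := by
    apply Integrable.mono' (integrable_const (C * (|Real.log ε| + |Real.log C|)))
    · exact (hμmeas.mul (Real.measurable_log.comp hμmeas)).aestronglyMeasurable
    · filter_upwards [hμpos] with x hx
      have hμC : μ x ≤ C := (le_abs_self _).trans (hC x)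
      have h1 : Real.log ε ≤ Real.log (μ x) := Real.log_le_log hε hx.le
      have h2 : Real.log (μ x) ≤ Real.log C := Real.log_le_log (hε.trans hx) hμC
      have h3 : |Real.log (μ x)| ≤ |Real.log ε| + |Real.log C| := by
        rw [abs_le]
        have := neg_abs_le (Real.log ε)
        have := le_abs_self (Real.log C)
        have := abs_nonneg (Real.log ε)
        have := abs_nonneg (Real.log C)
        constructor <;> linarith
      rw [Real.norm_eq_abs, abs_mul]
      exact mul_le_mul (hC x) h3 (abs_nonneg _) ((abs_nonneg _).trans (hC x))
  have hsplit : (∫ x, μ x * Real.log (μ x / max ε (μbar x)) ∂vol)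
      = (∫ x, μ x * Real.log (μ x) ∂vol)
        - ∫ x, μ x * Real.log (max ε (μbar x)) ∂vol := by
    rw [← integral_sub hμlogμ_int hμlogp_int]
    apply integral_congr_ae
    filter_upwards [hμpos] with x hx
    rw [Real.log_div (ne_of_gt (hε.trans hx)) (ne_of_gt (hεp x))]
    ring
  rw [hsplit, hsum, hμone, hone]
  ring
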